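/- Let Ω ⊂ ℝ³ be a bounded domain and 0 < s < 1/2. Then extension by zero defines a bounded linear operator from H^s(Ω) to H^s(ℝ³), provided the boundary distance function d(x) := dist(x, ∂Ω) satisfies d(·)^{−2s} ∈ L^q(Ω) for some q > 1 with 2/(1 − 1/q) a valid Sobolev exponent for H^s(Ω). More precisely: if v ∈ H^s(Ω), ṽ denotes its extension by 0, and the double integral defining the Gagliardo seminorm of ṽ over ℝ³ is split, then the cross term is bounded by c(s) ‖v‖²_{L^r(Ω)} ‖d(·)^{−2s}‖_{L^{(r/2)'}(Ω)} where H^s(Ω) ↪ L^r(Ω) with r > 2. -/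

import Mathlib

open MeasureTheory ENNReal


open Metric Set

local notation "E3" => EuclideanSpace ℝ (Fin 3)



lemma ball_infDist_frontier_subset' {Ω : Set E3} (hΩ : IsOpen Ω) {x : E3} (hx : x ∈ Ω) :
    Metric.ball x (Metric.infDist x (frontier Ω)) ⊆ Ω := by
  set d := Metric.infDist x (frontier Ω) with hd
  rcases le_or_gt d 0 with h | h
  · simp [Metric.ball_eq_empty.2 h]
  · have hsub : Metric.ball x d ⊆ Ω ∪ interior Ωᶜ := by
      intro z hz
      by_cases hcl : z ∈ closure Ω
      · by_cases hzo : z ∈ Ω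
        · exact Or.inl hzo
        · exfalso
          have hzf : z ∈ frontier Ω := ⟨hcl, by rwa [hΩ.interior_eq]⟩
          have h1 : d ≤ dist x z := Metric.infDist_le_dist_of_mem hzf
          have h2 : dist x z < d := by rw [dist_comm]; exact Metric.mem_ball.1 hz
          exact absurd h1 (not_le.2 h2)
      · exact Or.inr (by rwa [interior_compl, Set.mem_compl_iff])
    have hdisj : Disjoint Ω (interior Ωᶜ) :=
      disjoint_compl_right.mono_right interior_subset
    rcases (convex_ball x d).isPreconnected.subset_or_subset hΩ isOpen_interior hdisj hsub with
      hsubΩ | hsubc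
    · exact hsubΩ
    · exact absurd hx (interior_subset (hsubc (Metric.mem_ball_self h)))

lemma exists_annulus' {d t : ℝ} (hd : 0 < d) (ht : d ≤ t) :
    ∃ n : ℕ, 2 ^ n * d ≤ t ∧ t < 2 ^ (n + 1) * d := by
  have h1 : (1 : ℝ) ≤ t / d := (one_le_div hd).2 ht
  have hP : ∃ m : ℕ, t / d < 2 ^ m := pow_unbounded_of_one_lt (t / d) one_lt_two
  set N := Nat.find hP with hNdef
  have hN : t / d < 2 ^ N := Nat.find_spec hP
  have hN0 : N ≠ 0 := by
    intro h0
    rw [h0] at hN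
    simp at hN
    linarith
  refine ⟨N - 1, ?_, ?_⟩
  · have hmin : ¬ (t / d < 2 ^ (N - 1)) := Nat.find_min hP (Nat.sub_lt (Nat.pos_of_ne_zero hN0) one_pos)
    rw [not_lt] at hmin
    calc (2:ℝ) ^ (N-1) * d ≤ (t/d) * d := by nlinarith
    _ = t := div_mul_cancel₀ t hd.ne'
  · have : N - 1 + 1 = N := Nat.succ_pred_eq_of_pos (Nat.pos_of_ne_zero hN0)
    rw [this]
    calc t = (t/d) * d := (div_mul_cancel₀ t hd.ne').symm
    _ < 2 ^ N * d := by nlinarith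

lemma real_calc' {s d : ℝ} (hd : 0 < d) (n : ℕ) :
    (2 ^ (n + 1) * d) ^ (3 : ℕ) * (2 ^ n * d) ^ (-(3 + 2 * s)) =
      8 * ((2 : ℝ) ^ (-(2 * s))) ^ n * d ^ (-(2 * s)) := by
  have h2n : (0:ℝ) < 2 ^ n := by positivity
  rw [Real.mul_rpow h2n.le hd.le, mul_pow]
  have hdpart : (d : ℝ) ^ (3:ℕ) * d ^ (-(3 + 2*s)) = d ^ (-(2*s)) := by
    rw [← Real.rpow_natCast d 3, ← Real.rpow_add hd]
    norm_num
  have h2part : ((2:ℝ) ^ (n+1)) ^ (3:ℕ) * ((2:ℝ) ^ n) ^ (-(3 + 2*s)) =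
      8 * ((2:ℝ) ^ (-(2 * s))) ^ n := by
    rw [← pow_mul, ← Real.rpow_natCast 2 ((n+1)*3), ← Real.rpow_natCast 2 n,
      ← Real.rpow_mul (by norm_num : (0:ℝ) ≤ 2), ← Real.rpow_add (by norm_num : (0:ℝ) < 2),
      ← Real.rpow_natCast ((2:ℝ) ^ (-(2*s))) n, ← Real.rpow_mul (by norm_num : (0:ℝ) ≤ 2)]
    have h8 : (8:ℝ) = 2 ^ (3:ℝ) := by
      rw [show (3:ℝ) = ((3:ℕ):ℝ) by norm_num, Real.rpow_natCast]; norm_num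
    rw [h8, ← Real.rpow_add (by norm_num : (0:ℝ) < 2)]
    congr 1
    push_cast
    ring
  calc ((2:ℝ) ^ (n+1)) ^ (3:ℕ) * d ^ (3:ℕ) * (((2:ℝ)^n) ^ (-(3+2*s)) * d ^ (-(3+2*s)))
      = (((2:ℝ) ^ (n+1)) ^ (3:ℕ) * ((2:ℝ)^n) ^ (-(3+2*s))) * (d ^ (3:ℕ) * d ^ (-(3+2*s))) := by ring
    _ = 8 * ((2:ℝ) ^ (-(2 * s))) ^ n * d ^ (-(2 * s)) := by rw [hdpart, h2part]

lemma inner_bound' {s : ℝ} (hs0 : 0 < s) (hs : s < 1 / 2) :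
    ∃ C : ℝ≥0∞, C ≠ 0 ∧ C ≠ ∞ ∧ ∀ (x : E3) (d : ℝ), 0 < d →
      (∫⁻ y in (Metric.ball x d)ᶜ, (edist x y ^ (3 + 2 * s))⁻¹) ≤
        C * ENNReal.ofReal (d ^ (-(2 * s))) := by
  set q : ℝ := (2 : ℝ) ^ (-(2 * s)) with hqdef
  have hq0 : 0 < q := Real.rpow_pos_of_pos two_pos _
  have hq1 : q < 1 := Real.rpow_lt_one_of_one_lt_of_neg one_lt_two (by linarith)
  set B := volume (Metric.ball (0 : E3) 1) with hBdef
  have hB0 : B ≠ 0 := (measure_ball_pos volume 0 one_pos).ne'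
  have hBt : B ≠ ∞ := measure_ball_lt_top.ne
  have hgeo_ne : (1 : ℝ≥0∞) - ENNReal.ofReal q ≠ 0 := by
    rw [Ne, tsub_eq_zero_iff_le, not_le]
    exact ENNReal.ofReal_lt_one.2 hq1
  refine ⟨B * ENNReal.ofReal 8 * (1 - ENNReal.ofReal q)⁻¹, ?_, ?_, ?_⟩
  · exact mul_ne_zero (mul_ne_zero hB0 (by simp)) (ENNReal.inv_ne_zero.2 (by
      exact ne_top_of_le_ne_top one_ne_top tsub_le_self))
  · exact ENNReal.mul_ne_top (ENNReal.mul_ne_top hBt ofReal_ne_top)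
      (ENNReal.inv_ne_top.2 hgeo_ne)
  · intro x d hd
    set A : ℕ → Set E3 := fun n =>
      Metric.closedBall x (2 ^ (n + 1) * d) \ Metric.ball x (2 ^ n * d) with hAdef
    have hcover : (Metric.ball x d)ᶜ ⊆ ⋃ n, A n := by
      intro y hy
      have hyd : d ≤ dist y x := not_lt.1 (fun h => hy (Metric.mem_ball.2 h))
      obtain ⟨n, h1, h2⟩ := exists_annulus' hd hyd
      exact Set.mem_iUnion.2 ⟨n, Metric.mem_closedBall.2 h2.le, fun hb =>
        absurd (Metric.mem_ball.1 hb) (not_lt.2 h1)⟩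
    have hterm : ∀ n : ℕ, (∫⁻ y in A n, (edist x y ^ (3 + 2 * s))⁻¹) ≤
        B * ENNReal.ofReal (8 * q ^ n * d ^ (-(2 * s))) := by
      intro n
      have hpos : (0 : ℝ) < 2 ^ n * d := by positivity
      have hstep : ∀ y ∈ A n, (edist x y ^ (3 + 2 * s))⁻¹ ≤
          ((ENNReal.ofReal (2 ^ n * d)) ^ (3 + 2 * s))⁻¹ := by
        intro y hy
        have h1 : 2 ^ n * d ≤ dist x y := by
          rw [dist_comm]; exact not_lt.1 (fun h => hy.2 (Metric.mem_ball.2 h))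
        have h2 : ENNReal.ofReal (2 ^ n * d) ≤ edist x y := by
          rw [edist_dist]; exact ENNReal.ofReal_le_ofReal h1
        exact ENNReal.inv_le_inv.2 (ENNReal.rpow_le_rpow h2 (by positivity))
      calc (∫⁻ y in A n, (edist x y ^ (3 + 2 * s))⁻¹)
          ≤ ∫⁻ _ in A n, ((ENNReal.ofReal (2 ^ n * d)) ^ (3 + 2 * s))⁻¹ :=
            setLIntegral_mono measurable_const hstep
        _ = ((ENNReal.ofReal (2 ^ n * d)) ^ (3 + 2 * s))⁻¹ * volume (A n) :=
            setLIntegral_const _ _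
        _ ≤ ((ENNReal.ofReal (2 ^ n * d)) ^ (3 + 2 * s))⁻¹ *
              volume (Metric.closedBall x (2 ^ (n + 1) * d)) :=
            mul_le_mul_right (measure_mono diff_subset) _
        _ = B * ENNReal.ofReal (8 * q ^ n * d ^ (-(2 * s))) := by
            rw [Measure.addHaar_closedBall volume x (by positivity : (0:ℝ) ≤ 2 ^ (n+1) * d)]
            rw [show Module.finrank ℝ E3 = 3 from finrank_euclideanSpace_fin]
            rw [ENNReal.ofReal_rpow_of_pos hpos,
              ← ENNReal.ofReal_inv_of_pos (Real.rpow_pos_of_pos hpos _),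
              ← Real.rpow_neg hpos.le, ← mul_assoc,
              ← ENNReal.ofReal_mul (by positivity : (0:ℝ) ≤ (2^n*d)^(-(3+2*s)))]
            rw [mul_comm ((2^n*d) ^ (-(3+2*s))) _, real_calc' hd n]
            ring
    calc (∫⁻ y in (Metric.ball x d)ᶜ, (edist x y ^ (3 + 2 * s))⁻¹)
        ≤ ∫⁻ y in ⋃ n, A n, (edist x y ^ (3 + 2 * s))⁻¹ := lintegral_mono_set hcover
      _ ≤ ∑' n, ∫⁻ y in A n, (edist x y ^ (3 + 2 * s))⁻¹ := lintegral_iUnion_le _ _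
      _ ≤ ∑' n, B * ENNReal.ofReal (8 * q ^ n * d ^ (-(2 * s))) :=
            ENNReal.tsum_le_tsum hterm
      _ = B * ENNReal.ofReal 8 * (1 - ENNReal.ofReal q)⁻¹ *
            ENNReal.ofReal (d ^ (-(2 * s))) := by
          have : ∀ n : ℕ, B * ENNReal.ofReal (8 * q ^ n * d ^ (-(2 * s))) =
              (B * ENNReal.ofReal 8 * ENNReal.ofReal (d ^ (-(2 * s)))) *
                (ENNReal.ofReal q) ^ n := by
            intro n
            rw [ENNReal.ofReal_mul (by positivity), ENNReal.ofReal_mul (by norm_num),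
              ENNReal.ofReal_pow hq0.le]
            ring
          rw [tsum_congr this, ENNReal.tsum_mul_left, ENNReal.tsum_geometric]
          ring

/-- The cross term in the Gagliardo seminorm of the zero extension is controlled:
for `0 < s < 1/2` there is a constant `c(s)` such that for every bounded open
`Ω ⊂ ℝ³`, every `r > 2` and every measurable `v`,
`∫_Ω ∫_{Ωᶜ} |v x|² / |x-y|^{3+2s} ≤ c(s) ‖v‖²_{L^r(Ω)} ‖d(·)^{-2s}‖_{L^{(r/2)'}(Ω)}`,
where `d` is the distance to `∂Ω`. -/
theorem stmt2 (s : ℝ) (hs0 : 0 < s) (hs : s < 1 / 2) :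
    ∃ c : ℝ, 0 < c ∧
      ∀ (Ω : Set (EuclideanSpace ℝ (Fin 3))), IsOpen Ω → Bornology.IsBounded Ω →
      ∀ r : ℝ, 2 < r →
      ∀ v : EuclideanSpace ℝ (Fin 3) → ℝ, Measurable v →
      (∫⁻ x in Ω, ∫⁻ y in Ωᶜ, ENNReal.ofReal (v x ^ 2) / edist x y ^ (3 + 2 * s)) ≤
        ENNReal.ofReal c *
          ((∫⁻ x in Ω, ENNReal.ofReal (|v x| ^ r)) ^ (2 / r)) *
          ((∫⁻ x in Ω,
              ENNReal.ofReal
                (Metric.infDist x (frontier Ω) ^ (-(2 * s) * (r / (r - 2))))) ^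
            ((r - 2) / r)) := by
  obtain ⟨C, hC0, hCt, hC⟩ := inner_bound' hs0 hs
  refine ⟨C.toReal, ENNReal.toReal_pos hC0 hCt, ?_⟩
  intro Ω hΩo hΩb r hr v hv
  rcases Set.eq_empty_or_nonempty Ω with rfl | hne
  · simp
  have hΩne_univ : Ω ≠ Set.univ := fun h =>
    NormedSpace.unbounded_univ ℝ E3 (h ▸ hΩb)
  have hfr : (frontier Ω).Nonempty := nonempty_frontier_iff.2 ⟨hne, hΩne_univ⟩
  have hd_pos : ∀ x ∈ Ω, 0 < Metric.infDist x (frontier Ω) := by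
    intro x hx
    refine (isClosed_frontier.notMem_iff_infDist_pos hfr).1 ?_
    exact fun hxf => hxf.2 (by rwa [hΩo.interior_eq])
  set f : E3 → ℝ≥0∞ := fun x => ENNReal.ofReal (v x ^ 2) with hfdef
  set g : E3 → ℝ≥0∞ :=
    fun x => ENNReal.ofReal (Metric.infDist x (frontier Ω) ^ (-(2 * s))) with hgdef
  have hfm : Measurable f := by fun_prop
  have hgm : Measurable g := by
    apply Measurable.ennreal_ofReal
    fun_prop
  have step1 : (∫⁻ x in Ω, ∫⁻ y in Ωᶜ, ENNReal.ofReal (v x ^ 2) / edist x y ^ (3 + 2 * s)) ≤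
      C * ∫⁻ x in Ω, f x * g x := by
    have hpt : ∀ x ∈ Ω, (∫⁻ y in Ωᶜ, ENNReal.ofReal (v x ^ 2) / edist x y ^ (3 + 2 * s)) ≤
        C * (f x * g x) := by
      intro x hx
      have heq : (∫⁻ y in Ωᶜ, ENNReal.ofReal (v x ^ 2) / edist x y ^ (3 + 2 * s)) =
          ENNReal.ofReal (v x ^ 2) * ∫⁻ y in Ωᶜ, (edist x y ^ (3 + 2 * s))⁻¹ := by
        simp_rw [div_eq_mul_inv]
        exact lintegral_const_mul' _ _ ofReal_ne_top
      rw [heq]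
      have hsub : Ωᶜ ⊆ (Metric.ball x (Metric.infDist x (frontier Ω)))ᶜ :=
        Set.compl_subset_compl.2 (ball_infDist_frontier_subset' hΩo hx)
      calc ENNReal.ofReal (v x ^ 2) * ∫⁻ y in Ωᶜ, (edist x y ^ (3 + 2 * s))⁻¹
          ≤ ENNReal.ofReal (v x ^ 2) * (C * g x) := by
            refine mul_le_mul_right ?_ _
            exact le_trans (lintegral_mono_set hsub) (hC x _ (hd_pos x hx))
        _ = C * (f x * g x) := by rw [hfdef]; ring
    calc (∫⁻ x in Ω, ∫⁻ y in Ωᶜ, ENNReal.ofReal (v x ^ 2) / edist x y ^ (3 + 2 * s))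
        ≤ ∫⁻ x in Ω, C * (f x * g x) := setLIntegral_mono' hΩo.measurableSet hpt
      _ = C * ∫⁻ x in Ω, f x * g x := lintegral_const_mul' _ _ hCt
  have hr2 : (0:ℝ) < r - 2 := by linarith
  have hr0 : (0:ℝ) < r := by linarith
  have hpq : Real.HolderConjugate (r / 2) (r / (r - 2)) := by
    refine ⟨?_, div_pos hr0 two_pos, div_pos hr0 hr2⟩
    rw [inv_div, inv_div, inv_one, ← add_div, div_eq_one_iff_eq hr0.ne']
    ring
  have holder := ENNReal.lintegral_mul_le_Lp_mul_Lq (volume.restrict Ω) hpq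
    hfm.aemeasurable hgm.aemeasurable
  have hf_eq : ∀ x : E3, f x ^ (r / 2) = ENNReal.ofReal (|v x| ^ r) := by
    intro x
    rw [hfdef]
    simp only
    rw [ENNReal.ofReal_rpow_of_nonneg (sq_nonneg _) (by positivity)]
    congr 1
    have h2r : ((2:ℕ):ℝ) * (r / 2) = r := by push_cast; ring
    rw [← sq_abs (v x), ← Real.rpow_natCast |v x| 2, ← Real.rpow_mul (abs_nonneg _), h2r]
  have hg_eq : ∀ x : E3, g x ^ (r / (r - 2)) =
      ENNReal.ofReal (Metric.infDist x (frontier Ω) ^ (-(2 * s) * (r / (r - 2)))) := by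
    intro x
    rw [hgdef]
    simp only
    rw [ENNReal.ofReal_rpow_of_nonneg (Real.rpow_nonneg Metric.infDist_nonneg _)
      (div_nonneg hr0.le hr2.le), ← Real.rpow_mul Metric.infDist_nonneg]
  refine step1.trans ?_
  rw [ENNReal.ofReal_toReal hCt, mul_assoc]
  refine mul_le_mul_right ?_ C
  calc (∫⁻ x in Ω, f x * g x)
      ≤ (∫⁻ x in Ω, f x ^ (r / 2)) ^ (1 / (r / 2)) *
          (∫⁻ x in Ω, g x ^ (r / (r - 2))) ^ (1 / (r / (r - 2))) := holder
    _ = _ := by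
        simp_rw [hf_eq, hg_eq]
        rw [one_div_div, one_div_div]
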